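/- Let n ≥ 1 and let A be an n × n matrix with integer entries. Let B = (A.map (Int.cast : ℤ → ℝ))ᵀ * (A.map Int.cast), a real symmetric positive semidefinite matrix, and let λ_1, …, λ_n be its eigenvalues (listed with multiplicity, via the Hermitian spectral theorem). Then ∑ i, Real.log (λ i) ≥ 0; equivalently, the product of the nonzero eigenvalues of B is at least 1. (This is the core computation showing that finitely described invariant random subgroups, and hence co-sofic IRSs, satisfy Lück's determinant conjecture.) -/

import Mathlib

open scoped Classical
open Matrix Polynomial

lemma my_charpoly_conj {n R : Type*} [DecidableEq n] [Fintype n] [CommRing R]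
    (U V D : Matrix n n R) (hUV : U * V = 1) (hVU : V * U = 1) :
    (U * D * V).charpoly = D.charpoly := by
  have hmap : ∀ M N : Matrix n n R,
      (C : R →+* R[X]).mapMatrix (M * N) =
        (C : R →+* R[X]).mapMatrix M * (C : R →+* R[X]).mapMatrix N := fun M N => map_mul _ M N
  have h1 : (C : R →+* R[X]).mapMatrix U * (C : R →+* R[X]).mapMatrix V = 1 := by
    rw [← hmap, hUV, _root_.map_one]
  have hscal : (C : R →+* R[X]).mapMatrix U * Matrix.scalar n (X : R[X]) *
      (C : R →+* R[X]).mapMatrix V = Matrix.scalar n (X : R[X]) := by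
    rw [← scalar_commute (X : R[X]) (Commute.all _) ((C : R →+* R[X]).mapMatrix U), mul_assoc, h1, mul_one]
  have h : charmatrix (U * D * V) =
      (C : R →+* R[X]).mapMatrix U * charmatrix D * (C : R →+* R[X]).mapMatrix V := by
    rw [charmatrix, charmatrix, Matrix.mul_sub, Matrix.sub_mul, hscal, hmap, hmap]
  have h2 : ((C : R →+* R[X]).mapMatrix U).det * ((C : R →+* R[X]).mapMatrix V).det = 1 := by
    rw [← det_mul, h1, det_one]
  rw [Matrix.charpoly, Matrix.charpoly, h, det_mul, det_mul]
  ring_nf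
  rw [mul_comm, ← mul_assoc, mul_comm ((C : R →+* R[X]).mapMatrix V).det, h2, one_mul]

/-- For an integer matrix `A`, the sum of the logs of the eigenvalues of `B = AᵀA`
(over ℝ, with `Real.log 0 = 0`) is nonnegative; equivalently, the product of the nonzero
eigenvalues of `B` is at least `1`. -/
theorem intMatrix_detConjecture {n : ℕ} (hn : 1 ≤ n) (A : Matrix (Fin n) (Fin n) ℤ)
    (hB : ((A.map (Int.cast : ℤ → ℝ))ᵀ * A.map (Int.cast : ℤ → ℝ)).IsHermitian) :
    0 ≤ ∑ i, Real.log (hB.eigenvalues i) ∧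
    1 ≤ ∏ i ∈ Finset.univ.filter (fun i => hB.eigenvalues i ≠ 0), hB.eigenvalues i := by
  set B := (A.map (Int.cast : ℤ → ℝ))ᵀ * A.map (Int.cast : ℤ → ℝ) with hBdef
  set lam := hB.eigenvalues with hlam
  -- eigenvalues are nonneg
  have hpsd : B.PosSemidef := by
    have := Matrix.posSemidef_conjTranspose_mul_self (A.map (Int.cast : ℤ → ℝ))
    simpa [Matrix.conjTranspose_eq_transpose_of_trivial] using this
  have hnonneg : ∀ i, 0 ≤ lam i := fun i => hpsd.eigenvalues_nonneg i
  -- B has an integer charpoly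
  have hBmap : B = ((Aᵀ * A).map (Int.castRingHom ℝ)) := by
    ext i j
    simp [hBdef, Matrix.mul_apply, Matrix.map_apply, Matrix.transpose_apply]
  -- charpoly of B equals product over eigenvalues
  have hcp : B.charpoly = ∏ i, (X - C (lam i)) := by
    have hst := hB.spectral_theorem
    simp only [Unitary.conjStarAlgAut_apply, Unitary.coe_star] at hst
    set U := (hB.eigenvectorUnitary : Matrix (Fin n) (Fin n) ℝ)
    have hd : Matrix.diagonal (RCLike.ofReal ∘ lam) = Matrix.diagonal lam := by
      congr 1
    have h1 : U * star U = 1 := Matrix.mem_unitaryGroup_iff.mp hB.eigenvectorUnitary.2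
    have h2 : star U * U = 1 := Matrix.mem_unitaryGroup_iff'.mp hB.eigenvectorUnitary.2
    calc B.charpoly = (U * Matrix.diagonal lam * star U).charpoly := by rw [← hd, ← hst]
      _ = (Matrix.diagonal lam).charpoly := my_charpoly_conj _ _ _ h1 h2
      _ = ∏ i, (X - C (lam i)) := by
          rw [Matrix.charpoly_of_upperTriangular _ (Matrix.blockTriangular_diagonal lam)]
          simp
  -- split into zero and nonzero eigenvalues
  set S := Finset.univ.filter (fun i => lam i ≠ 0) with hS
  set Z := Finset.univ.filter (fun i => lam i = 0) with hZ
  set m := Z.card with hm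
  set P := ∏ i ∈ S, lam i with hP
  have hprod : (∏ i, (X - C (lam i))) = X ^ m * ∏ i ∈ S, (X - C (lam i)) := by
    rw [← Finset.prod_filter_mul_prod_filter_not Finset.univ (fun i => lam i = 0)]
    congr 1
    rw [Finset.prod_congr rfl (fun i hi => by
      simp only [hZ, Finset.mem_filter] at hi
      rw [hi.2, map_zero, sub_zero]), Finset.prod_const, hm]
  have hcoeff : B.charpoly.coeff m = (-1) ^ S.card * P := by
    have h0 := Polynomial.coeff_X_pow_mul (∏ i ∈ S, (X - C (lam i))) m 0
    rw [zero_add] at h0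
    rw [hcp, hprod, h0]
    rw [Polynomial.coeff_zero_eq_eval_zero, Polynomial.eval_prod]
    have heval : ∀ i ∈ S, Polynomial.eval 0 (X - C (lam i)) = -1 * lam i := fun i _ => by simp
    rw [Finset.prod_congr rfl heval, Finset.prod_mul_distrib, Finset.prod_const, hP]
  -- the coefficient is an integer
  set c := ((Aᵀ * A).charpoly).coeff m with hc
  have hcast : (c : ℝ) = B.charpoly.coeff m := by
    rw [hBmap, Matrix.charpoly_map, Polynomial.coeff_map]
    rfl
  have hPpos : 0 < P := Finset.prod_pos (fun i hi => by
    rcases (hnonneg i).lt_or_eq with h | h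
    · exact h
    · exact absurd h.symm (by simpa [hS] using hi))
  have hceq : (c : ℝ) = (-1) ^ S.card * P := by rw [hcast, hcoeff]
  have habs : |(c : ℝ)| = P := by
    rw [hceq, abs_mul, abs_pow, abs_neg, abs_one, one_pow, one_mul, abs_of_pos hPpos]
  have hcne : c ≠ 0 := by
    intro h
    rw [h] at habs
    simp at habs
    linarith
  have hP1 : 1 ≤ P := by
    have h1c : (1 : ℝ) ≤ |(c : ℝ)| := by
      rw [← Int.cast_abs]
      exact_mod_cast Int.one_le_abs hcne
    linarith [habs ▸ h1c]
  constructor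
  · have hsum : ∑ i, Real.log (lam i) = Real.log P := by
      rw [← Finset.sum_filter_add_sum_filter_not Finset.univ (fun i => lam i ≠ 0)]
      have hz : ∑ i ∈ Finset.univ.filter (fun i => ¬ lam i ≠ 0), Real.log (lam i) = 0 := by
        apply Finset.sum_eq_zero
        intro i hi
        simp only [Finset.mem_filter, not_not] at hi
        rw [hi.2, Real.log_zero]
      rw [hz, add_zero, hP, ← Real.log_prod]
      intro i hi
      simpa [hS] using hi
    rw [hsum]
    exact Real.log_nonneg hP1
  · exact hP1
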